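/- Let X be an N-way real tensor of size I_1 × ⋯ × I_N, let σ : {1,…,N} → {1,…,K} be a cell map with cell dimensions Ĩ_1,…,Ĩ_K satisfying I_n = Ĩ_{σ(n)}, let λ ∈ ℝ^r and A_k ∈ ℝ^{Ĩ_k × r} for k ∈ {1,…,K}, and let M be the symmetric Kruskal tensor with entries m_i = ∑_{j=1}^r λ_j ∏_{n=1}^N (A_{σ(n)})_{i_n, j}. Let ℓ : ℝ × ℝ → ℝ be such that for every x ∈ ℝ the map m ↦ ℓ(x, m) is differentiable on ℝ with derivative ∂ℓ/∂m(x, m), and define the objective F(λ, A_1,…,A_K) = ∑_i ℓ(x_i, m_i), the sum running over all multi-indices. Then for every b ∈ {1,…,r}, the partial derivative of F with respect to the weight λ_b exists at (λ, A_1,…,A_K) and equals ∑_i y_i ∏_{n=1}^N (A_{σ(n)})_{i_n, b}, where y_i = ∂ℓ/∂m(x_i, m_i). -/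

import Mathlib

open Finset

/-- **SymGCP gradient with respect to the weights.**
For the SymGCP objective `F(λ) = ∑_i ℓ(x_i, m_i)` with the symmetric Kruskal model
`m_i = ∑_j λ_j ∏_n (A_{σ(n)})_{i_n, j}`, the partial derivative with respect to `λ_b`
exists and equals `∑_i y_i ∏_n (A_{σ(n)})_{i_n, b}` where `y_i = ∂ℓ/∂m (x_i, m_i)`. -/
theorem symgcp_gradient_lambda
    (N K r : ℕ) (σ : Fin N → Fin K) (Itil : Fin K → ℕ)
    (X : ((n : Fin N) → Fin (Itil (σ n))) → ℝ)
    (lam : Fin r → ℝ) (A : (k : Fin K) → Fin (Itil k) → Fin r → ℝ)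
    (ℓ : ℝ → ℝ → ℝ) (dℓ : ℝ → ℝ → ℝ)
    (hℓ : ∀ x m : ℝ, HasDerivAt (fun z => ℓ x z) (dℓ x m) m)
    (b : Fin r) :
    HasDerivAt
      (fun t : ℝ => ∑ i : (n : Fin N) → Fin (Itil (σ n)),
        ℓ (X i) (∑ j : Fin r, Function.update lam b t j * ∏ n : Fin N, A (σ n) (i n) j))
      (∑ i : (n : Fin N) → Fin (Itil (σ n)),
        dℓ (X i) (∑ j : Fin r, lam j * ∏ n : Fin N, A (σ n) (i n) j) *
          ∏ n : Fin N, A (σ n) (i n) b)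
      (lam b) := by
  apply HasDerivAt.fun_sum
  intro i _
  set c : Fin r → ℝ := fun j => ∏ n : Fin N, A (σ n) (i n) j with hc
  have hg : HasDerivAt (fun t : ℝ => ∑ j : Fin r, Function.update lam b t j * c j)
      (c b) (lam b) := by
    have : HasDerivAt (fun t : ℝ => ∑ j : Fin r, Function.update lam b t j * c j)
        (∑ j : Fin r, (if j = b then c b else 0)) (lam b) := by
      apply HasDerivAt.fun_sum
      intro j _
      by_cases h : j = b
      · subst h
        simp only [if_pos rfl, Function.update_self]
        simpa using (hasDerivAt_id (lam j)).mul_const (c j)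
      · simp only [if_neg h, Function.update_of_ne h]
        exact hasDerivAt_const _ _
    simpa using this
  have hcomp := (hℓ (X i) (∑ j : Fin r, Function.update lam b (lam b) j * c j)).comp
      (lam b) hg
  simp only [Function.update_eq_self] at hcomp
  exact hcomp
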